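/- Let ū ∈ ℝ² and let f : ℝ² → [0,∞) be measurable such that f, v ↦ ‖v−ū‖²·f(v) and v ↦ f(v)·log f(v) are integrable on ℝ² (with the convention 0·log 0 = 0). Set n := ∫_{ℝ²} f(v) dv. Then n·log n ≤ ∫_{ℝ²} f·log f dv + (1/2)·∫_{ℝ²} ‖v−ū‖²·f dv + n·log(2π), and moreover n·|log n| ≤ ∫_{ℝ²} f·log f dv + (1/2)·∫_{ℝ²} ‖v−ū‖²·f dv + n·log(2π) + 2·e^{−1}. -/
import Mathlib


open MeasureTheory

/-- Jensen-type entropy bound: with `n := ∫ f`, one has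
`n·log n ≤ ∫ f·log f + (1/2)·∫ ‖v−ū‖²·f + n·log(2π)` and
`n·|log n| ≤ ∫ f·log f + (1/2)·∫ ‖v−ū‖²·f + n·log(2π) + 2e⁻¹`. -/
theorem entropy_moment_bound (uBar : EuclideanSpace ℝ (Fin 2))
    (f : EuclideanSpace ℝ (Fin 2) → ℝ) (hf_meas : Measurable f)
    (hf_nonneg : ∀ v, 0 ≤ f v)
    (hf_int : Integrable f)
    (hmom : Integrable (fun v => ‖v - uBar‖ ^ 2 * f v))
    (hent : Integrable (fun v => f v * Real.log (f v))) :
    (∫ v, f v) * Real.log (∫ v, f v) ≤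
        (∫ v, f v * Real.log (f v)) + (1 / 2) * (∫ v, ‖v - uBar‖ ^ 2 * f v)
          + (∫ v, f v) * Real.log (2 * Real.pi) ∧
    (∫ v, f v) * |Real.log (∫ v, f v)| ≤
        (∫ v, f v * Real.log (f v)) + (1 / 2) * (∫ v, ‖v - uBar‖ ^ 2 * f v)
          + (∫ v, f v) * Real.log (2 * Real.pi) + 2 * Real.exp (-1) := by
  set n : ℝ := ∫ v, f v with hn
  have hn_nonneg : 0 ≤ n := integral_nonneg hf_nonneg
  -- The standard Gaussian density on ℝ²
  set M : EuclideanSpace ℝ (Fin 2) → ℝ :=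
    fun v => (2 * Real.pi)⁻¹ * Real.exp (-(1/2) * ‖v - uBar‖ ^ 2) with hMdef
  have hpi : (0:ℝ) < 2 * Real.pi := by positivity
  have hM_pos : ∀ v, 0 < M v := fun v => by positivity
  -- integrability of the Gaussian
  have hGauss_int : Integrable (fun v : EuclideanSpace ℝ (Fin 2) =>
      Real.exp (-(1/2) * ‖v‖ ^ 2)) := by
    have := (GaussianFourier.integrable_cexp_neg_mul_sq_norm_add (b := (1/2 : ℂ))
      (by norm_num) 0 (0 : EuclideanSpace ℝ (Fin 2))).norm
    simpa [Complex.norm_exp, ← Complex.ofReal_pow] using this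
  have hM_int : Integrable M := by
    refine Integrable.const_mul ?_ _
    have := hGauss_int.comp_sub_right uBar
    simpa using this
  -- integral of the Gaussian density is 1
  have hGauss_eval : ∫ v : EuclideanSpace ℝ (Fin 2), Real.exp (-(1/2) * ‖v‖ ^ 2)
      = 2 * Real.pi := by
    rw [GaussianFourier.integral_rexp_neg_mul_sq_norm (by norm_num)]
    simp
    ring
  have hM_one : ∫ v, M v = 1 := by
    rw [hMdef, integral_const_mul]
    have : ∫ v : EuclideanSpace ℝ (Fin 2), Real.exp (-(1/2) * ‖v - uBar‖ ^ 2)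
        = ∫ v : EuclideanSpace ℝ (Fin 2), Real.exp (-(1/2) * ‖v‖ ^ 2) :=
      integral_sub_right_eq_self (fun v => Real.exp (-(1/2) * ‖v‖ ^ 2)) uBar
    rw [this, hGauss_eval]
    field_simp
  rcases eq_or_lt_of_le hn_nonneg with hzero | hpos
  · -- n = 0 : f vanishes a.e., all integrals are zero
    have hae : f =ᵐ[volume] 0 :=
      (integral_eq_zero_iff_of_nonneg hf_nonneg hf_int).mp hzero.symm
    have h1 : (∫ v, f v * Real.log (f v)) = 0 := by
      rw [show (0:ℝ) = ∫ _ : EuclideanSpace ℝ (Fin 2), (0:ℝ) by simp]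
      refine integral_congr_ae ?_
      filter_upwards [hae] with v hv
      simp [hv]
    have h2 : (∫ v, ‖v - uBar‖ ^ 2 * f v) = 0 := by
      rw [show (0:ℝ) = ∫ _ : EuclideanSpace ℝ (Fin 2), (0:ℝ) by simp]
      refine integral_congr_ae ?_
      filter_upwards [hae] with v hv
      simp [hv]
    rw [h1, h2, ← hzero]
    constructor
    · simp
    · simp only [Real.log_zero, abs_zero, mul_zero, zero_mul, add_zero, zero_add, mul_zero]
      positivity
  · -- n > 0 : pointwise Gibbs inequality
    have key : ∀ v, f v * Real.log n - f v * Real.log (2 * Real.pi)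
        - (1/2) * (‖v - uBar‖ ^ 2 * f v) + f v - n * M v ≤ f v * Real.log (f v) := by
      intro v
      rcases eq_or_lt_of_le (hf_nonneg v) with h | h
      · rw [← h]
        have := (hM_pos v).le
        nlinarith [mul_nonneg hn_nonneg this]
      · -- Gibbs: a log a ≥ a log b + a - b with b = n * M v
        set a := f v with ha
        set b := n * M v with hb
        have hbpos : 0 < b := mul_pos hpos (hM_pos v)
        have hlog : Real.log (b / a) ≤ b / a - 1 :=
          Real.log_le_sub_one_of_pos (div_pos hbpos h)
        rw [Real.log_div (ne_of_gt hbpos) (ne_of_gt h)] at hlog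
        have hmul : a * (Real.log b - Real.log a) ≤ a * (b / a - 1) :=
          mul_le_mul_of_nonneg_left hlog h.le
        have hdiv : a * (b / a - 1) = b - a := by field_simp
        rw [hdiv] at hmul
        have hlogb : Real.log b = Real.log n - Real.log (2 * Real.pi)
            - (1/2) * ‖v - uBar‖ ^ 2 := by
          rw [hb, hMdef]
          rw [Real.log_mul (ne_of_gt hpos) (ne_of_gt (hM_pos v)), Real.log_mul
            (by positivity) (Real.exp_ne_zero _), Real.log_inv, Real.log_exp]
          ring
        nlinarith [hmul, hlogb]
    -- integrate the pointwise inequality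
    have A : Integrable (fun v => f v * Real.log n) := hf_int.mul_const _
    have B : Integrable (fun v => f v * Real.log (2 * Real.pi)) := hf_int.mul_const _
    have C : Integrable (fun v => (1/2 : ℝ) * (‖v - uBar‖ ^ 2 * f v)) := hmom.const_mul _
    have D : Integrable (fun v => n * M v) := hM_int.const_mul _
    have AB : Integrable (fun v => f v * Real.log n - f v * Real.log (2 * Real.pi)) := A.sub B
    have ABC : Integrable (fun v => f v * Real.log n - f v * Real.log (2 * Real.pi)
        - (1/2) * (‖v - uBar‖ ^ 2 * f v)) := AB.sub C
    have ABCF : Integrable (fun v => f v * Real.log n - f v * Real.log (2 * Real.pi)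
        - (1/2) * (‖v - uBar‖ ^ 2 * f v) + f v) := ABC.add hf_int
    have hint_lhs : Integrable (fun v => f v * Real.log n - f v * Real.log (2 * Real.pi)
        - (1/2) * (‖v - uBar‖ ^ 2 * f v) + f v - n * M v) := ABCF.sub D
    have hineq := integral_mono hint_lhs hent key
    have hcomp : (∫ v, (f v * Real.log n - f v * Real.log (2 * Real.pi)
        - (1/2) * (‖v - uBar‖ ^ 2 * f v) + f v - n * M v))
        = n * Real.log n - n * Real.log (2 * Real.pi)
          - (1/2) * (∫ v, ‖v - uBar‖ ^ 2 * f v) + n - n := by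
      rw [integral_sub ABCF D, integral_add ABC hf_int, integral_sub AB C,
        integral_sub A B, integral_mul_const, integral_mul_const, integral_const_mul,
        integral_const_mul, hM_one, ← hn]
      ring
    rw [hcomp] at hineq
    have first : n * Real.log n ≤ (∫ v, f v * Real.log (f v))
        + (1/2) * (∫ v, ‖v - uBar‖ ^ 2 * f v) + n * Real.log (2 * Real.pi) := by
      linarith
    refine ⟨first, ?_⟩
    rcases le_or_gt 0 (Real.log n) with hl | hl
    · rw [abs_of_nonneg hl]
      have : (0:ℝ) ≤ 2 * Real.exp (-1) := by positivity
      linarith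
    · rw [abs_of_neg hl]
      -- n * (-log n) ≤ exp (-1) for 0 < n
      have hsmall : n * (-Real.log n) ≤ Real.exp (-1) := by
        have hinv : (0:ℝ) < (n * Real.exp 1)⁻¹ := by positivity
        have hlog := Real.log_le_sub_one_of_pos hinv
        rw [Real.log_inv, Real.log_mul (ne_of_gt hpos) (Real.exp_ne_zero 1),
          Real.log_exp] at hlog
        have hmul := mul_le_mul_of_nonneg_left hlog hpos.le
        have heq : n * (n * Real.exp 1)⁻¹ = (Real.exp 1)⁻¹ := by
          field_simp
        rw [Real.exp_neg]
        nlinarith [hmul, heq, Real.exp_pos 1]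
      nlinarith [first]
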